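/- (Conservation laws, inclusion.) Let (C,R) be a reaction network on S = U^c ∪ U with a linearly eliminable set U, and let (C̃, R̃) be the reduced reaction network obtained by elimination of U, with stoichiometric subspaces S and S̃ respectively. Then ζ(S^⊥) ⊆ S̃^⊥, where ζ is the projection onto the coordinates of U^c. Concretely: if ω ∈ ℝ^n satisfies ω · (y'_r − y_r) = 0 for all r ∈ R, then ζ(ω) · (y'_{r̃} − y_{r̃}) = 0 for all r̃ ∈ R̃. -/

import Mathlib

/-- A multidigraph: a set of nodes `V`, a set of edges `E`, and source/target maps. -/
structure Multidigraph (V E : Type*) where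
  src : E → V
  tgt : E → V

namespace Multidigraph

variable {V E : Type*}

/-- One-step edge relation using only the edges in `τ`. -/
def Rel (G : Multidigraph V E) (τ : Set E) (a b : V) : Prop :=
  ∃ e ∈ τ, G.src e = a ∧ G.tgt e = b

/-- Undirected (symmetrized) one-step relation. -/
def URel (G : Multidigraph V E) (a b : V) : Prop :=
  G.Rel Set.univ a b ∨ G.Rel Set.univ b a

/-- Node set of the (weakly) connected component containing `v`. -/
def component (G : Multidigraph V E) (v : V) : Set V :=
  {w | Relation.ReflTransGen G.URel v w}

/-- `τ` is a spanning tree of the subgraph of `G` induced on the node set `W`,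
rooted at `r`: all edges stay inside `W`, every non-root node of `W` has exactly
one outgoing edge in `τ`, the root has none, and every node of `W` reaches `r`
through `τ`. -/
def IsSpanningTreeOn (G : Multidigraph V E) (W : Set V) (τ : Finset E) (r : V) : Prop :=
  (∀ e ∈ τ, G.src e ∈ W ∧ G.tgt e ∈ W) ∧
  (∀ v ∈ W, v ≠ r → ∃! e, e ∈ τ ∧ G.src e = v) ∧
  (∀ e ∈ τ, G.src e ≠ r) ∧
  (∀ v ∈ W, Relation.ReflTransGen (G.Rel (τ : Set E)) v r)

/-- Spanning tree of `G` rooted at `r`. -/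
def IsSpanningTree (G : Multidigraph V E) (τ : Finset E) (r : V) : Prop :=
  G.IsSpanningTreeOn Set.univ τ r

/-- A cycle: a nonempty closed directed path with pairwise distinct nodes. -/
def IsCycle (G : Multidigraph V E) (l : List E) : Prop :=
  l ≠ [] ∧ (l.map G.src).Nodup ∧
  l.Chain' (fun a b => G.tgt a = G.src b) ∧
  ∀ h : l ≠ [], G.tgt (l.getLast h) = G.src (l.head h)

def StronglyConnected (G : Multidigraph V E) : Prop :=
  ∀ a b : V, Relation.ReflTransGen (G.Rel Set.univ) a b

def Connected (G : Multidigraph V E) : Prop :=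
  ∀ a b : V, Relation.ReflTransGen G.URel a b

/-- Incidence matrix of a multidigraph. -/
def incidence [DecidableEq V] (G : Multidigraph V E) : Matrix V E ℝ := fun v e =>
  if G.tgt e = v ∧ G.src e ≠ v then 1
  else if G.src e = v ∧ G.tgt e ≠ v then (-1 : ℝ) else 0

end Multidigraph


private lemma listSumApply {R : Type} {p : ℕ} (l : List R) (f : R → Fin p → ℝ) (i : Fin p) :
    (l.map f).sum i = (l.map fun r => f r i).sum := by
  induction l with
  | nil => simp
  | cons a t ih => simp [ih]

private lemma sumFinListSum {R : Type} {p : ℕ} (l : List R) (h : R → Fin p → ℝ) :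
    ∑ i : Fin p, (l.map fun r => h r i).sum = (l.map fun r => ∑ i : Fin p, h r i).sum := by
  induction l with
  | nil => simp
  | cons a t ih => simp [Finset.sum_add_distrib, ih]

private lemma mulListDiff {R : Type} (c : ℝ) (l : List R) (f g : R → ℝ) :
    c * ((l.map f).sum - (l.map g).sum) = (l.map fun r => c * (f r - g r)).sum := by
  induction l with
  | nil => simp
  | cons a t ih => simp only [List.map_cons, List.sum_cons]; rw [← ih]; ring

private lemma sumMapNeg {R : Type} (l : List R) (h : R → ℝ) :
    (l.map fun r => -(h r)).sum = -((l.map h).sum) := by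
  induction l with
  | nil => simp
  | cons a t ih => simp [ih]; ring

private lemma telescope {R : Type} (g : R → ℝ) (g' : R → ℝ) :
    ∀ (rs : List R) (hne : rs ≠ []), rs.Chain' (fun a b => g' a = g b) →
      (rs.map fun r => g' r - g r).sum = g' (rs.getLast hne) - g (rs.head hne) := by
  intro rs
  induction rs with
  | nil => intro h; exact absurd rfl h
  | cons a t ih =>
    intro _ hch
    cases t with
    | nil => simp
    | cons b t' =>
      have hch' := hch
      simp only [List.Chain', List.isChain_cons_cons] at hch'
      have := ih (by simp) hch'.2
      simp only [List.map_cons, List.sum_cons] at this ⊢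
      rw [List.getLast_cons (by simp), List.head_cons]
      rw [this, hch'.1]
      simp only [List.head_cons]
      ring

/-- Conservation laws, inclusion: if `ω` is orthogonal to all
reaction vectors of the original network, then `ζ(ω)` is orthogonal to all
reaction vectors of the reduced network: both those coming from reactions not
involving `U`, and those coming from cycles of `G_U`. -/
theorem stmt10 {p m : ℕ} {R : Type}
    (y y' : R → (Fin p → ℝ) × (Fin m → ℝ))
    (ω : (Fin p → ℝ) × (Fin m → ℝ))
    (hω : ∀ r : R,
      (∑ i, ω.1 i * ((y' r).1 i - (y r).1 i))
        + (∑ j, ω.2 j * ((y' r).2 j - (y r).2 j)) = 0) :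
    (∀ r : R, (y r).2 = 0 → (y' r).2 = 0 →
        ∑ i, ω.1 i * ((y' r).1 i - (y r).1 i) = 0) ∧
    (∀ (rs : List R) (hne : rs ≠ []) (fsrc ftgt : R → Option (Fin m)),
      (∀ r ∈ rs, (y r).2 = (match fsrc r with | some j => Pi.single j 1 | none => 0)) →
      (∀ r ∈ rs, (y' r).2 = (match ftgt r with | some j => Pi.single j 1 | none => 0)) →
      rs.Chain' (fun a b => ftgt a = fsrc b) →
      ftgt (rs.getLast hne) = fsrc (rs.head hne) →
      (rs.map fsrc).Nodup →
      ∑ i, ω.1 i *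
          (((rs.map (fun r => (y' r).1)).sum i) - ((rs.map (fun r => (y r).1)).sum i)) = 0) := by
  constructor
  · intro r h0 h0'
    have := hω r
    rw [h0, h0'] at this
    simpa using this
  · intro rs hne fsrc ftgt hsrc htgt hch hcyc _
    classical
    set g : Option (Fin m) → ℝ := fun o => match o with | some j => ω.2 j | none => 0 with hg
    have key : ∀ r ∈ rs, ∑ i, ω.1 i * ((y' r).1 i - (y r).1 i)
        = -(g (ftgt r) - g (fsrc r)) := by
      intro r hr
      have h2 : ∑ j, ω.2 j * ((y' r).2 j - (y r).2 j) = g (ftgt r) - g (fsrc r) := by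
        rw [hsrc r hr, htgt r hr]
        simp only [mul_sub, Finset.sum_sub_distrib]
        congr 1
        · cases h : ftgt r <;>
            simp [hg, Pi.single_apply, mul_ite, Finset.sum_ite_eq']
        · cases h : fsrc r <;>
            simp [hg, Pi.single_apply, mul_ite, Finset.sum_ite_eq']
      have := hω r
      rw [h2] at this
      linarith
    have expand : ∑ i, ω.1 i *
          (((rs.map (fun r => (y' r).1)).sum i) - ((rs.map (fun r => (y r).1)).sum i))
        = (rs.map fun r => ∑ i, ω.1 i * ((y' r).1 i - (y r).1 i)).sum := by
      rw [← sumFinListSum]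
      apply Finset.sum_congr rfl
      intro i _
      rw [listSumApply, listSumApply, mulListDiff]
    rw [expand]
    rw [List.map_congr_left key]
    rw [sumMapNeg,
      telescope (fun r => g (fsrc r)) (fun r => g (ftgt r)) rs hne
        (hch.imp fun a b h => by rw [h]), hcyc]
    ring
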